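/- Let α ∈ (0,1) and let G₀ be a Borel probability measure on ℝ with finite first moment. Then a pair (ℓ*,u*) ∈ ℝ² with ℓ* ≤ u* minimizes the expected interval score (ℓ,u) ↦ ∫ S_int(ℓ,u;τ) dG₀(τ) over all pairs ℓ ≤ u if and only if ℓ* is an α/2-quantile of G₀ and u* is a (1−α/2)-quantile of G₀. -/

import Mathlib

open MeasureTheory Set

/-- The interval score of the interval `[ℓ, u]` at observation `τ`, at level `α`. -/
noncomputable def Sint (α ℓ u τ : ℝ) : ℝ :=
  (u - ℓ) + (2 / α) * (ℓ - τ) * (if τ < ℓ then 1 else 0)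
    + (2 / α) * (τ - u) * (if u < τ then 1 else 0)

/-- `x` is a `q`-quantile of the Borel probability measure `G` on `ℝ`. -/
def IsQuantile (G : Measure ℝ) (q x : ℝ) : Prop :=
  q ≤ (G (Iic x)).toReal ∧ 1 - q ≤ (G (Ici x)).toReal

/-! ### Auxiliary definitions and lemmas -/

/-- Expected positive part `E[(x - τ)⁺]`. -/
noncomputable def Ep (G : Measure ℝ) (x : ℝ) : ℝ := ∫ τ, max (x - τ) 0 ∂G

/-- Expected positive part `E[(τ - x)⁺]`. -/
noncomputable def Em (G : Measure ℝ) (x : ℝ) : ℝ := ∫ τ, max (τ - x) 0 ∂G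

lemma intMaxL {G : Measure ℝ} [IsFiniteMeasure G] (h : Integrable id G) (x : ℝ) :
    Integrable (fun τ => max (x - τ) 0) G :=
  ((integrable_const x).sub h).pos_part

lemma intMaxR {G : Measure ℝ} [IsFiniteMeasure G] (h : Integrable id G) (x : ℝ) :
    Integrable (fun τ => max (τ - x) 0) G :=
  (h.sub (integrable_const x)).pos_part

lemma toReal_mono' {G : Measure ℝ} [IsProbabilityMeasure G] {s t : Set ℝ} (hst : s ⊆ t) :
    (G s).toReal ≤ (G t).toReal :=
  ENNReal.toReal_mono (measure_ne_top _ _) (measure_mono hst)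

lemma compl_real {G : Measure ℝ} [IsProbabilityMeasure G] {s : Set ℝ} (hs : MeasurableSet s) :
    (G sᶜ).toReal = 1 - (G s).toReal := by
  rw [prob_compl_eq_one_sub hs, ENNReal.toReal_sub_of_le prob_le_one ENNReal.one_ne_top]
  simp

lemma ep_diff_ge {G : Measure ℝ} [IsProbabilityMeasure G] (h : Integrable id G)
    {a b : ℝ} (hab : a ≤ b) :
    (b - a) * (G (Iic a)).toReal ≤ Ep G b - Ep G a := by
  have hpt : ∀ τ : ℝ, (Iic a).indicator (fun _ => b - a) τ
      ≤ max (b - τ) 0 - max (a - τ) 0 := by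
    intro τ
    simp only [Set.indicator_apply, mem_Iic]
    split_ifs with hτ
    · rw [max_eq_left (by linarith), max_eq_left (by linarith)]
      linarith
    · push_neg at hτ
      rw [max_eq_right (by linarith : a - τ ≤ 0)]
      have := le_max_right (b - τ) 0
      linarith
  have hmono := integral_mono (μ := G)
    (f := (Iic a).indicator (fun _ => b - a))
    (g := fun τ => max (b - τ) 0 - max (a - τ) 0)
    ((integrable_const (b - a)).indicator measurableSet_Iic)
    (by exact (intMaxL h b).sub (intMaxL h a)) hpt
  rw [integral_indicator_const _ measurableSet_Iic, smul_eq_mul, mul_comm,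
    integral_sub (intMaxL h b) (intMaxL h a)] at hmono
  exact hmono

lemma ep_diff_le {G : Measure ℝ} [IsProbabilityMeasure G] (h : Integrable id G)
    {a b : ℝ} (hab : a ≤ b) :
    Ep G b - Ep G a ≤ (b - a) * (G (Iio b)).toReal := by
  have hpt : ∀ τ : ℝ, max (b - τ) 0 - max (a - τ) 0
      ≤ (Iio b).indicator (fun _ => b - a) τ := by
    intro τ
    simp only [Set.indicator_apply, mem_Iio]
    split_ifs with hτ
    · rcases le_or_gt τ a with hτa | hτa
      · rw [max_eq_left (by linarith), max_eq_left (by linarith)]; linarith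
      · rw [max_eq_left (by linarith), max_eq_right (by linarith)]; linarith
    · push_neg at hτ
      rw [max_eq_right (by linarith), max_eq_right (by linarith)]; linarith
  have hmono := integral_mono (μ := G)
    (f := fun τ => max (b - τ) 0 - max (a - τ) 0)
    (g := (Iio b).indicator (fun _ => b - a))
    (by exact (intMaxL h b).sub (intMaxL h a))
    ((integrable_const (b - a)).indicator measurableSet_Iio) hpt
  rw [integral_indicator_const _ measurableSet_Iio, smul_eq_mul, mul_comm,
    integral_sub (intMaxL h b) (intMaxL h a)] at hmono
  exact hmono

lemma em_diff_ge {G : Measure ℝ} [IsProbabilityMeasure G] (h : Integrable id G)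
    {a b : ℝ} (hab : a ≤ b) :
    (b - a) * (G (Ici b)).toReal ≤ Em G a - Em G b := by
  have hpt : ∀ τ : ℝ, (Ici b).indicator (fun _ => b - a) τ
      ≤ max (τ - a) 0 - max (τ - b) 0 := by
    intro τ
    simp only [Set.indicator_apply, mem_Ici]
    split_ifs with hτ
    · rw [max_eq_left (by linarith), max_eq_left (by linarith)]; linarith
    · push_neg at hτ
      rw [max_eq_right (by linarith : τ - b ≤ 0)]
      have := le_max_right (τ - a) 0
      linarith
  have hmono := integral_mono (μ := G)
    (f := (Ici b).indicator (fun _ => b - a))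
    (g := fun τ => max (τ - a) 0 - max (τ - b) 0)
    ((integrable_const (b - a)).indicator measurableSet_Ici)
    (by exact (intMaxR h a).sub (intMaxR h b)) hpt
  rw [integral_indicator_const _ measurableSet_Ici, smul_eq_mul, mul_comm,
    integral_sub (intMaxR h a) (intMaxR h b)] at hmono
  exact hmono

lemma em_diff_le {G : Measure ℝ} [IsProbabilityMeasure G] (h : Integrable id G)
    {a b : ℝ} (hab : a ≤ b) :
    Em G a - Em G b ≤ (b - a) * (G (Ioi a)).toReal := by
  have hpt : ∀ τ : ℝ, max (τ - a) 0 - max (τ - b) 0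
      ≤ (Ioi a).indicator (fun _ => b - a) τ := by
    intro τ
    simp only [Set.indicator_apply, mem_Ioi]
    split_ifs with hτ
    · rcases le_or_gt τ b with hτb | hτb
      · rw [max_eq_right (by linarith : τ - b ≤ 0), max_eq_left (by linarith)]; linarith
      · rw [max_eq_left (by linarith), max_eq_left (by linarith)]; linarith
    · push_neg at hτ
      rw [max_eq_right (by linarith), max_eq_right (by linarith)]; linarith
  have hmono := integral_mono (μ := G)
    (f := fun τ => max (τ - a) 0 - max (τ - b) 0)
    (g := (Ioi a).indicator (fun _ => b - a))
    (by exact (intMaxR h a).sub (intMaxR h b))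
    ((integrable_const (b - a)).indicator measurableSet_Ioi) hpt
  rw [integral_indicator_const _ measurableSet_Ioi, smul_eq_mul, mul_comm,
    integral_sub (intMaxR h a) (intMaxR h b)] at hmono
  exact hmono

lemma exA {G : Measure ℝ} [IsProbabilityMeasure G] {a q : ℝ}
    (h : (G (Iic a)).toReal < q) : ∃ x, a < x ∧ (G (Iio x)).toReal < q := by
  have hanti : Antitone fun n : ℕ => Iio (a + 1 / (n + 1)) := by
    intro m n hmn
    apply Iio_subset_Iio
    have h1 : (1 : ℝ) / (n + 1) ≤ 1 / (m + 1) := by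
      apply one_div_le_one_div_of_le (by positivity)
      have : (m : ℝ) ≤ n := by exact_mod_cast hmn
      linarith
    linarith
  have hset : ⋂ n : ℕ, Iio (a + 1 / (n + 1)) = Iic a := by
    ext x
    simp only [mem_iInter, mem_Iio, mem_Iic]
    constructor
    · intro hx
      by_contra hax
      push_neg at hax
      obtain ⟨n, hn⟩ := exists_nat_one_div_lt (sub_pos.2 hax)
      have := hx n
      linarith
    · intro hx n
      have : (0 : ℝ) < 1 / (n + 1) := by positivity
      linarith
  have ht : Filter.Tendsto (fun n : ℕ => G (Iio (a + 1 / (n + 1)))) Filter.atTop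
      (nhds (G (Iic a))) := by
    have := MeasureTheory.tendsto_measure_iInter_atTop (μ := G)
      (fun n => measurableSet_Iio.nullMeasurableSet) hanti ⟨0, measure_ne_top _ _⟩
    rwa [hset] at this
  have ht2 : Filter.Tendsto (fun n : ℕ => (G (Iio (a + 1 / (n + 1)))).toReal) Filter.atTop
      (nhds ((G (Iic a)).toReal)) := (ENNReal.tendsto_toReal (measure_ne_top _ _)).comp ht
  obtain ⟨n, hn⟩ := (ht2.eventually_lt_const h).exists
  have hpos : (0 : ℝ) < 1 / (n + 1) := by positivity
  exact ⟨a + 1 / (n + 1), by linarith, hn⟩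

lemma exB {G : Measure ℝ} [IsProbabilityMeasure G] {a q : ℝ}
    (h : q < (G (Iio a)).toReal) : ∃ x, x < a ∧ q < (G (Iic x)).toReal := by
  have hmono : Monotone fun n : ℕ => Iic (a - 1 / (n + 1)) := by
    intro m n hmn
    apply Iic_subset_Iic.2
    have h1 : (1 : ℝ) / (n + 1) ≤ 1 / (m + 1) := by
      apply one_div_le_one_div_of_le (by positivity)
      have : (m : ℝ) ≤ n := by exact_mod_cast hmn
      linarith
    linarith
  have hset : ⋃ n : ℕ, Iic (a - 1 / (n + 1)) = Iio a := by
    ext x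
    simp only [mem_iUnion, mem_Iic, mem_Iio]
    constructor
    · rintro ⟨n, hn⟩
      have : (0 : ℝ) < 1 / (n + 1) := by positivity
      linarith
    · intro hx
      obtain ⟨n, hn⟩ := exists_nat_one_div_lt (sub_pos.2 hx)
      exact ⟨n, by linarith⟩
  have ht : Filter.Tendsto (fun n : ℕ => G (Iic (a - 1 / (n + 1)))) Filter.atTop
      (nhds (G (Iio a))) := by
    have := MeasureTheory.tendsto_measure_iUnion_atTop (μ := G) hmono
    rwa [hset] at this
  have ht2 : Filter.Tendsto (fun n : ℕ => (G (Iic (a - 1 / (n + 1)))).toReal) Filter.atTop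
      (nhds ((G (Iio a)).toReal)) := (ENNReal.tendsto_toReal (measure_ne_top _ _)).comp ht
  obtain ⟨n, hn⟩ := (ht2.eventually_const_lt h).exists
  have hpos : (0 : ℝ) < 1 / (n + 1) := by positivity
  exact ⟨a - 1 / (n + 1), by linarith, hn⟩

lemma exC {G : Measure ℝ} [IsProbabilityMeasure G] {a q : ℝ}
    (h : (G (Ici a)).toReal < q) : ∃ x, x < a ∧ (G (Ioi x)).toReal < q := by
  have hanti : Antitone fun n : ℕ => Ioi (a - 1 / (n + 1)) := by
    intro m n hmn
    apply Ioi_subset_Ioi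
    have h1 : (1 : ℝ) / (n + 1) ≤ 1 / (m + 1) := by
      apply one_div_le_one_div_of_le (by positivity)
      have : (m : ℝ) ≤ n := by exact_mod_cast hmn
      linarith
    linarith
  have hset : ⋂ n : ℕ, Ioi (a - 1 / (n + 1)) = Ici a := by
    ext x
    simp only [mem_iInter, mem_Ioi, mem_Ici]
    constructor
    · intro hx
      by_contra hax
      push_neg at hax
      obtain ⟨n, hn⟩ := exists_nat_one_div_lt (sub_pos.2 hax)
      have := hx n
      linarith
    · intro hx n
      have : (0 : ℝ) < 1 / (n + 1) := by positivity
      linarith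
  have ht : Filter.Tendsto (fun n : ℕ => G (Ioi (a - 1 / (n + 1)))) Filter.atTop
      (nhds (G (Ici a))) := by
    have := MeasureTheory.tendsto_measure_iInter_atTop (μ := G)
      (fun n => measurableSet_Ioi.nullMeasurableSet) hanti ⟨0, measure_ne_top _ _⟩
    rwa [hset] at this
  have ht2 : Filter.Tendsto (fun n : ℕ => (G (Ioi (a - 1 / (n + 1)))).toReal) Filter.atTop
      (nhds ((G (Ici a)).toReal)) := (ENNReal.tendsto_toReal (measure_ne_top _ _)).comp ht
  obtain ⟨n, hn⟩ := (ht2.eventually_lt_const h).exists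
  have hpos : (0 : ℝ) < 1 / (n + 1) := by positivity
  exact ⟨a - 1 / (n + 1), by linarith, hn⟩

lemma exD {G : Measure ℝ} [IsProbabilityMeasure G] {a q : ℝ}
    (h : q < (G (Ioi a)).toReal) : ∃ x, a < x ∧ q < (G (Ici x)).toReal := by
  have hmono : Monotone fun n : ℕ => Ici (a + 1 / (n + 1)) := by
    intro m n hmn
    apply Ici_subset_Ici.2
    have h1 : (1 : ℝ) / (n + 1) ≤ 1 / (m + 1) := by
      apply one_div_le_one_div_of_le (by positivity)
      have : (m : ℝ) ≤ n := by exact_mod_cast hmn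
      linarith
    linarith
  have hset : ⋃ n : ℕ, Ici (a + 1 / (n + 1)) = Ioi a := by
    ext x
    simp only [mem_iUnion, mem_Ici, mem_Ioi]
    constructor
    · rintro ⟨n, hn⟩
      have : (0 : ℝ) < 1 / (n + 1) := by positivity
      linarith
    · intro hx
      obtain ⟨n, hn⟩ := exists_nat_one_div_lt (sub_pos.2 hx)
      exact ⟨n, by linarith⟩
  have ht : Filter.Tendsto (fun n : ℕ => G (Ici (a + 1 / (n + 1)))) Filter.atTop
      (nhds (G (Ioi a))) := by
    have := MeasureTheory.tendsto_measure_iUnion_atTop (μ := G) hmono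
    rwa [hset] at this
  have ht2 : Filter.Tendsto (fun n : ℕ => (G (Ici (a + 1 / (n + 1)))).toReal) Filter.atTop
      (nhds ((G (Ioi a)).toReal)) := (ENNReal.tendsto_toReal (measure_ne_top _ _)).comp ht
  obtain ⟨n, hn⟩ := (ht2.eventually_const_lt h).exists
  have hpos : (0 : ℝ) < 1 / (n + 1) := by positivity
  exact ⟨a + 1 / (n + 1), by linarith, hn⟩

lemma integral_Sint {G : Measure ℝ} [IsProbabilityMeasure G] (h : Integrable id G)
    {α : ℝ} (ℓ u : ℝ) :
    ∫ τ, Sint α ℓ u τ ∂G = (u - ℓ) + (2 / α) * Ep G ℓ + (2 / α) * Em G u := by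
  have hfun : ∀ τ : ℝ, Sint α ℓ u τ
      = ((u - ℓ) + (2 / α) * max (ℓ - τ) 0) + (2 / α) * max (τ - u) 0 := by
    intro τ
    unfold Sint
    have e1 : (2 / α) * (ℓ - τ) * (if τ < ℓ then (1:ℝ) else 0) = (2 / α) * max (ℓ - τ) 0 := by
      split_ifs with hh
      · rw [max_eq_left (by linarith)]; ring
      · push_neg at hh
        rw [max_eq_right (by linarith)]; ring
    have e2 : (2 / α) * (τ - u) * (if u < τ then (1:ℝ) else 0) = (2 / α) * max (τ - u) 0 := by
      split_ifs with hh
      · rw [max_eq_left (by linarith)]; ring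
      · push_neg at hh
        rw [max_eq_right (by linarith)]; ring
    rw [e1, e2]
  calc ∫ τ, Sint α ℓ u τ ∂G
      = ∫ τ, ((u - ℓ) + (2 / α) * max (ℓ - τ) 0) + (2 / α) * max (τ - u) 0 ∂G := by
        exact integral_congr_ae (Filter.Eventually.of_forall hfun)
    _ = (∫ τ, (u - ℓ) + (2 / α) * max (ℓ - τ) 0 ∂G) + ∫ τ, (2 / α) * max (τ - u) 0 ∂G :=
        integral_add (by exact (integrable_const _).add ((intMaxL h ℓ).const_mul _))
          (by exact (intMaxR h u).const_mul _)
    _ = ((∫ _τ, (u - ℓ) ∂G) + ∫ τ, (2 / α) * max (ℓ - τ) 0 ∂G)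
          + ∫ τ, (2 / α) * max (τ - u) 0 ∂G := by
        rw [integral_add (by exact integrable_const _) (by exact (intMaxL h ℓ).const_mul _)]
    _ = (u - ℓ) + (2 / α) * Ep G ℓ + (2 / α) * Em G u := by
        rw [integral_const, integral_const_mul, integral_const_mul]
        simp [Ep, Em]

private lemma key_lt {c q d e ρ : ℝ} (hc : 0 < c) (hcq : c * q = 1) (hd : 0 < d)
    (he : e ≤ d * ρ) (hρ : ρ < q) : c * e < d := by
  nlinarith [mul_le_mul_of_nonneg_left he hc.le, mul_lt_mul_of_pos_left hρ (mul_pos hc hd)]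

private lemma key_gt {c q d e σ : ℝ} (hc : 0 < c) (hcq : c * q = 1) (hd : 0 < d)
    (he : d * σ ≤ e) (hσ : q < σ) : d < c * e := by
  nlinarith [mul_le_mul_of_nonneg_left he hc.le, mul_lt_mul_of_pos_left hσ (mul_pos hc hd)]

private lemma key_le {c q d e ρ : ℝ} (hc : 0 < c) (hcq : c * q = 1) (hd : 0 ≤ d)
    (he : e ≤ d * ρ) (hρ : ρ ≤ q) : c * e ≤ d := by
  nlinarith [mul_le_mul_of_nonneg_left he hc.le, mul_le_mul_of_nonneg_left hρ (mul_nonneg hc.le hd)]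

private lemma key_ge {c q d e σ : ℝ} (hc : 0 < c) (hcq : c * q = 1) (hd : 0 ≤ d)
    (he : d * σ ≤ e) (hσ : q ≤ σ) : d ≤ c * e := by
  nlinarith [mul_le_mul_of_nonneg_left he hc.le, mul_le_mul_of_nonneg_left hσ (mul_nonneg hc.le hd)]

/-- A pair `(ℓ*, u*)` with `ℓ* ≤ u*` minimizes the expected interval score over all pairs
`ℓ ≤ u` if and only if `ℓ*` is an `α/2`-quantile and `u*` a `(1 − α/2)`-quantile of `G₀`. -/
theorem stmt4 (α : ℝ) (hα : α ∈ Ioo (0 : ℝ) 1)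
    (G₀ : Measure ℝ) [IsProbabilityMeasure G₀] (hG₀ : Integrable id G₀)
    (lstar ustar : ℝ) (hlu : lstar ≤ ustar) :
    (∀ ℓ u : ℝ, ℓ ≤ u →
        (∫ τ, Sint α lstar ustar τ ∂G₀) ≤ ∫ τ, Sint α ℓ u τ ∂G₀)
      ↔ (IsQuantile G₀ (α / 2) lstar ∧ IsQuantile G₀ (1 - α / 2) ustar) := by
  obtain ⟨hα0, hα1⟩ := hα
  have hc : 0 < 2 / α := by positivity
  have hcq : (2 / α) * (α / 2) = 1 := by field_simp
  have hq0 : 0 < α / 2 := by linarith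
  have hqh : α / 2 < 1 / 2 := by linarith
  have hIio_l : (G₀ (Iio lstar)).toReal = 1 - (G₀ (Ici lstar)).toReal := by
    rw [← Set.compl_Ici, compl_real measurableSet_Ici]
  have hIoi_u : (G₀ (Ioi ustar)).toReal = 1 - (G₀ (Iic ustar)).toReal := by
    rw [← Set.compl_Iic, compl_real measurableSet_Iic]
  constructor
  · intro hmin
    refine ⟨⟨?_, ?_⟩, ?_, ?_⟩
    · -- α/2 ≤ G(Iic lstar)
      by_contra hcon
      push_neg at hcon
      obtain ⟨x, hx, hρ⟩ := exA hcon
      rcases eq_or_lt_of_le hlu with heq | hltu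
      · -- lstar = ustar : move both to (x, x)
        have hmin' := hmin x x le_rfl
        rw [integral_Sint hG₀, integral_Sint hG₀, ← heq] at hmin'
        have b1 : Ep G₀ x - Ep G₀ lstar ≤ (x - lstar) * (G₀ (Iio x)).toReal :=
          ep_diff_le hG₀ hx.le
        have b2 : Em G₀ x - Em G₀ lstar ≤ -((x - lstar) * (G₀ (Ici x)).toReal) := by
          have := em_diff_ge hG₀ hx.le
          linarith
        have hσ : (G₀ (Ici x)).toReal = 1 - (G₀ (Iio x)).toReal := by
          rw [← Set.compl_Iio, compl_real measurableSet_Iio]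
        have hdpos : 0 < x - lstar := by linarith
        nlinarith [mul_le_mul_of_nonneg_left (add_le_add b1 b2) hc.le,
          mul_pos hc hdpos, mul_pos (mul_pos hc hdpos) (show (0:ℝ) < 1 - 2 * (α/2) by linarith)]
      · -- lstar < ustar : move ℓ to min x ustar
        set x' := min x ustar with hx'
        have hx'l : lstar < x' := lt_min hx hltu
        have hx'u : x' ≤ ustar := min_le_right _ _
        have hρ' : (G₀ (Iio x')).toReal < α / 2 :=
          lt_of_le_of_lt (toReal_mono' (Iio_subset_Iio (min_le_left _ _))) hρ
        have hmin' := hmin x' ustar hx'u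
        rw [integral_Sint hG₀, integral_Sint hG₀] at hmin'
        have b1 : Ep G₀ x' - Ep G₀ lstar ≤ (x' - lstar) * (G₀ (Iio x')).toReal :=
          ep_diff_le hG₀ hx'l.le
        have := key_lt hc hcq (by linarith : (0:ℝ) < x' - lstar) b1 hρ'
        linarith
    · -- 1 - α/2 ≤ G(Ici lstar)
      by_contra hcon
      push_neg at hcon
      have hIio : α / 2 < (G₀ (Iio lstar)).toReal := by rw [hIio_l]; linarith
      obtain ⟨x, hx, hF⟩ := exB hIio
      have hmin' := hmin x ustar (by linarith)
      rw [integral_Sint hG₀, integral_Sint hG₀] at hmin'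
      have b1 : (lstar - x) * (G₀ (Iic x)).toReal ≤ Ep G₀ lstar - Ep G₀ x :=
        ep_diff_ge hG₀ hx.le
      have := key_gt hc hcq (by linarith : (0:ℝ) < lstar - x) b1 hF
      linarith
    · -- 1 - α/2 ≤ G(Iic ustar)
      by_contra hcon
      push_neg at hcon
      have hIoi : α / 2 < (G₀ (Ioi ustar)).toReal := by rw [hIoi_u]; linarith
      obtain ⟨x, hx, hF⟩ := exD hIoi
      have hmin' := hmin lstar x (by linarith)
      rw [integral_Sint hG₀, integral_Sint hG₀] at hmin'
      have b1 : (x - ustar) * (G₀ (Ici x)).toReal ≤ Em G₀ ustar - Em G₀ x :=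
        em_diff_ge hG₀ hx.le
      have := key_gt hc hcq (by linarith : (0:ℝ) < x - ustar) b1 hF
      linarith
    · -- 1 - (1 - α/2) = α/2 ≤ G(Ici ustar)
      rw [show (1 : ℝ) - (1 - α / 2) = α / 2 by ring]
      by_contra hcon
      push_neg at hcon
      obtain ⟨x, hx, hρ⟩ := exC hcon
      rcases eq_or_lt_of_le hlu with heq | hltu
      · -- lstar = ustar : move both to (x, x)
        have hmin' := hmin x x le_rfl
        rw [integral_Sint hG₀, integral_Sint hG₀, ← heq] at hmin'
        have hxl : x < lstar := lt_of_lt_of_eq hx heq.symm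
        have b1 : Em G₀ x - Em G₀ lstar ≤ (lstar - x) * (G₀ (Ioi x)).toReal :=
          em_diff_le hG₀ hxl.le
        have b2 : Ep G₀ x - Ep G₀ lstar ≤ -((lstar - x) * (G₀ (Iic x)).toReal) := by
          have := ep_diff_ge hG₀ hxl.le
          linarith
        have hσ : (G₀ (Iic x)).toReal = 1 - (G₀ (Ioi x)).toReal := by
          rw [← Set.compl_Ioi, compl_real measurableSet_Ioi]
        have hdpos : 0 < lstar - x := by linarith
        nlinarith [mul_le_mul_of_nonneg_left (add_le_add b1 b2) hc.le,
          mul_pos hc hdpos, mul_pos (mul_pos hc hdpos) (show (0:ℝ) < 1 - 2 * (α/2) by linarith)]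
      · -- lstar < ustar : move u to max x lstar
        set x' := max x lstar with hx'
        have hx'u : x' < ustar := max_lt hx hltu
        have hx'l : lstar ≤ x' := le_max_right _ _
        have hρ' : (G₀ (Ioi x')).toReal < α / 2 :=
          lt_of_le_of_lt (toReal_mono' (Ioi_subset_Ioi (le_max_left _ _))) hρ
        have hmin' := hmin lstar x' hx'l
        rw [integral_Sint hG₀, integral_Sint hG₀] at hmin'
        have b1 : Em G₀ x' - Em G₀ ustar ≤ (ustar - x') * (G₀ (Ioi x')).toReal :=
          em_diff_le hG₀ hx'u.le
        have := key_lt hc hcq (by linarith : (0:ℝ) < ustar - x') b1 hρ'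
        linarith
  · rintro ⟨⟨hl1, hl2⟩, ⟨hu1, hu2⟩⟩ ℓ u hℓu
    rw [integral_Sint hG₀, integral_Sint hG₀]
    have hu2' : α / 2 ≤ (G₀ (Ici ustar)).toReal := by linarith
    have hL : -lstar + (2 / α) * Ep G₀ lstar ≤ -ℓ + (2 / α) * Ep G₀ ℓ := by
      rcases le_or_gt ℓ lstar with hle | hlt
      · have b1 : Ep G₀ lstar - Ep G₀ ℓ ≤ (lstar - ℓ) * (G₀ (Iio lstar)).toReal :=
          ep_diff_le hG₀ hle
        have hb : (G₀ (Iio lstar)).toReal ≤ α / 2 := by rw [hIio_l]; linarith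
        have := key_le hc hcq (by linarith : (0:ℝ) ≤ lstar - ℓ) b1 hb
        linarith
      · have b1 : (ℓ - lstar) * (G₀ (Iic lstar)).toReal ≤ Ep G₀ ℓ - Ep G₀ lstar :=
          ep_diff_ge hG₀ hlt.le
        have := key_ge hc hcq (by linarith : (0:ℝ) ≤ ℓ - lstar) b1 hl1
        linarith
    have hU : ustar + (2 / α) * Em G₀ ustar ≤ u + (2 / α) * Em G₀ u := by
      rcases le_or_gt ustar u with hle | hlt
      · have b1 : Em G₀ ustar - Em G₀ u ≤ (u - ustar) * (G₀ (Ioi ustar)).toReal :=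
          em_diff_le hG₀ hle
        have hb : (G₀ (Ioi ustar)).toReal ≤ α / 2 := by rw [hIoi_u]; linarith
        have := key_le hc hcq (by linarith : (0:ℝ) ≤ u - ustar) b1 hb
        linarith
      · have b1 : (ustar - u) * (G₀ (Ici ustar)).toReal ≤ Em G₀ u - Em G₀ ustar :=
          em_diff_ge hG₀ hlt.le
        have := key_ge hc hcq (by linarith : (0:ℝ) ≤ ustar - u) b1 hu2'
        linarith
    linarith
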